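/- Let γ : ℝ → ℝ³ be a C² curve with |γ'(s)| = 1 for all s ∈ ℝ, and let r > 0 satisfy |γ''(s)| ≤ 1/r for all s ∈ ℝ. Let Ξ := {(s,x) ∈ ℝ × ℝ³ : |x − γ(s)| < r/8}, and let ξ : Ξ → ℝ be the function assigning to each (s,x) ∈ Ξ the unique value ξ(s,x) ∈ (s − r/4, s + r/4) with (x − γ(ξ(s,x))) · γ'(ξ(s,x)) = 0. Then: (i) ξ is C¹ on the open set Ξ; (ii) ∂ₛξ(s,x) = 0 for every (s,x) ∈ Ξ; (iii) the differential of ξ in x is Dₓξ(s,x) = (1 + q/(1 − q)) γ'(ξ(s,x)), where q := (x − γ(ξ(s,x))) · γ''(ξ(s,x)); (iv) if moreover γ(s+ℓ) = γ(s) + a for all s (for some ℓ > 0 and a ∈ ℝ³), then (s+ℓ, x+a) ∈ Ξ and ξ(s+ℓ, x+a) = ξ(s,x) + ℓ whenever (s,x) ∈ Ξ. -/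

import Mathlib

noncomputable section
open Real MeasureTheory

/-- `ℝ³` as Euclidean space. -/
abbrev R3 : Type := EuclideanSpace ℝ (Fin 3)

/-- Lemma 3.4, regularity and quasiperiodicity of the projection
parameter function `ξ`. -/
theorem stmt1
    (γ : ℝ → R3) (hγ : ContDiff ℝ 2 γ)
    (harc : ∀ s : ℝ, ‖deriv γ s‖ = 1)
    (r : ℝ) (hr : 0 < r)
    (hcurv : ∀ s : ℝ, ‖deriv (deriv γ) s‖ ≤ 1 / r)
    (Ξ : Set (ℝ × R3)) (hΞ : Ξ = {p : ℝ × R3 | ‖p.2 - γ p.1‖ < r / 8})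
    (ξ : ℝ × R3 → ℝ)
    (hξ : ∀ p ∈ Ξ, ξ p ∈ Set.Ioo (p.1 - r / 4) (p.1 + r / 4) ∧
      (inner ℝ (p.2 - γ (ξ p)) (deriv γ (ξ p)) : ℝ) = 0)
    (hξuniq : ∀ p ∈ Ξ, ∀ z : ℝ, z ∈ Set.Ioo (p.1 - r / 4) (p.1 + r / 4) →
      (inner ℝ (p.2 - γ z) (deriv γ z) : ℝ) = 0 → z = ξ p) :
    -- (i) `Ξ` is open and `ξ` is C¹ on `Ξ`
    IsOpen Ξ ∧ ContDiffOn ℝ 1 ξ Ξ ∧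
    -- (ii) `∂ₛ ξ = 0` on `Ξ`
    (∀ p ∈ Ξ, deriv (fun s : ℝ => ξ (s, p.2)) p.1 = 0) ∧
    -- (iii) `Dₓξ(s,x) = (1 + q/(1-q)) γ'(ξ(s,x))` with
    -- `q = (x - γ(ξ(s,x))) · γ''(ξ(s,x))`
    (∀ p ∈ Ξ, ∀ v : R3,
      fderiv ℝ (fun x : R3 => ξ (p.1, x)) p.2 v =
        (1 + (inner ℝ (p.2 - γ (ξ p)) (deriv (deriv γ) (ξ p)) : ℝ) /
            (1 - (inner ℝ (p.2 - γ (ξ p)) (deriv (deriv γ) (ξ p)) : ℝ))) *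
          (inner ℝ (deriv γ (ξ p)) v : ℝ)) ∧
    -- (iv) quasiperiodicity
    (∀ ℓ : ℝ, 0 < ℓ → ∀ a : R3, (∀ s : ℝ, γ (s + ℓ) = γ s + a) →
      ∀ p ∈ Ξ, (p.1 + ℓ, p.2 + a) ∈ Ξ ∧ ξ (p.1 + ℓ, p.2 + a) = ξ p + ℓ) := by
  have h2 : (2 : WithTop ℕ∞) = 1 + 1 := by rfl
  have hT : ContDiff ℝ 1 (deriv γ) := (contDiff_succ_iff_deriv.mp (h2 ▸ hγ)).2.2
  have hγd : Differentiable ℝ γ := hγ.differentiable (by norm_num)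
  have hTd : Differentiable ℝ (deriv γ) := hT.differentiable one_ne_zero
  -- Lipschitz bound on γ
  have hlip : ∀ a b : ℝ, ‖γ a - γ b‖ ≤ |a - b| := by
    intro a b
    have hlip : LipschitzWith 1 γ := lipschitzWith_of_nnnorm_deriv_le hγd
      (fun x => by rw [← NNReal.coe_le_coe]; simp [harc x])
    simpa [dist_eq_norm, Real.dist_eq] using hlip.dist_le_mul a b
  -- openness of Ξ
  have hopen : IsOpen Ξ := by
    rw [hΞ]
    exact isOpen_lt ((continuous_snd.sub (hγd.continuous.comp continuous_fst)).norm)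
      continuous_const
  -- bound on q
  have hqb : ∀ p ∈ Ξ, |(inner ℝ (p.2 - γ (ξ p)) (deriv (deriv γ) (ξ p)) : ℝ)| ≤ 3 / 8 := by
    intro p hp
    obtain ⟨hIoo, _⟩ := hξ p hp
    have hx : ‖p.2 - γ p.1‖ < r / 8 := by rw [hΞ] at hp; exact hp
    have hz : |p.1 - ξ p| ≤ r / 4 := by
      rw [abs_le]; constructor <;> [linarith [hIoo.2]; linarith [hIoo.1]]
    have hnorm : ‖p.2 - γ (ξ p)‖ ≤ 3 * r / 8 := by
      calc ‖p.2 - γ (ξ p)‖ ≤ ‖p.2 - γ p.1‖ + ‖γ p.1 - γ (ξ p)‖ := by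
            have := norm_sub_le_norm_sub_add_norm_sub (p.2) (γ p.1) (γ (ξ p))
            exact this
        _ ≤ r / 8 + r / 4 := by
            have := hlip p.1 (ξ p)
            exact add_le_add hx.le (this.trans hz)
        _ = 3 * r / 8 := by ring
    calc |(inner ℝ (p.2 - γ (ξ p)) (deriv (deriv γ) (ξ p)) : ℝ)|
        ≤ ‖p.2 - γ (ξ p)‖ * ‖deriv (deriv γ) (ξ p)‖ := abs_real_inner_le_norm _ _
      _ ≤ (3 * r / 8) * (1 / r) :=
          mul_le_mul hnorm (hcurv _) (norm_nonneg _) (by positivity)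
      _ = 3 / 8 := by field_simp
  -- the key local analysis at each point of Ξ
  have key : ∀ p ∈ Ξ, ContDiffAt ℝ 1 ξ p ∧
      ∀ w : ℝ × R3, fderiv ℝ ξ p w =
        (inner ℝ w.2 (deriv γ (ξ p)) : ℝ) /
          (1 - (inner ℝ (p.2 - γ (ξ p)) (deriv (deriv γ) (ξ p)) : ℝ)) := by
    intro p hp
    set z₀ : ℝ := ξ p with hz₀
    set q₀ : ℝ := (inner ℝ (p.2 - γ z₀) (deriv (deriv γ) z₀) : ℝ) with hq₀
    have hq₀b : |q₀| ≤ 3 / 8 := hqb p hp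
    have hb : q₀ - 1 ≠ 0 := by
      have := abs_le.mp hq₀b; intro h; linarith [this.2]
    have h1q : (1 : ℝ) - q₀ ≠ 0 := by
      intro h; apply hb; linarith
    set F : (ℝ × R3) × ℝ → ℝ := fun q => (inner ℝ (q.1.2 - γ q.2) (deriv γ q.2) : ℝ) with hF
    set p₀ : (ℝ × R3) × ℝ := (p, z₀) with hp₀
    -- F is C¹
    have hFC : ContDiff ℝ 1 F :=
      ContDiff.inner ℝ
        ((contDiff_snd.comp contDiff_fst).sub ((hγ.of_le (by norm_num)).comp contDiff_snd))
        (hT.comp contDiff_snd)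
    -- derivative of F at p₀
    set A : (ℝ × R3) →L[ℝ] ℝ :=
      (innerSL ℝ (deriv γ z₀)).comp (ContinuousLinearMap.snd ℝ ℝ R3) with hA
    set D : ((ℝ × R3) × ℝ) →L[ℝ] ℝ :=
      A.comp (ContinuousLinearMap.fst ℝ (ℝ × R3) ℝ) +
        (q₀ - 1) • (ContinuousLinearMap.snd ℝ (ℝ × R3) ℝ) with hD
    have hDF : HasFDerivAt F D p₀ := by
      have hγz : HasFDerivAt γ ((1 : ℝ →L[ℝ] ℝ).smulRight (deriv γ z₀)) z₀ :=
        (hγd z₀).hasDerivAt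
      have hTz : HasFDerivAt (deriv γ) ((1 : ℝ →L[ℝ] ℝ).smulRight (deriv (deriv γ) z₀)) z₀ :=
        (hTd z₀).hasDerivAt
      have h1 : HasFDerivAt (fun q : (ℝ × R3) × ℝ => q.1.2 - γ q.2)
          ((ContinuousLinearMap.snd ℝ ℝ R3).comp (ContinuousLinearMap.fst ℝ (ℝ × R3) ℝ) -
            ((1 : ℝ →L[ℝ] ℝ).smulRight (deriv γ z₀)).comp
              (ContinuousLinearMap.snd ℝ (ℝ × R3) ℝ)) p₀ :=
        (hasFDerivAt_snd.comp p₀ hasFDerivAt_fst).sub (hγz.comp p₀ hasFDerivAt_snd)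
      have h2' : HasFDerivAt (fun q : (ℝ × R3) × ℝ => deriv γ q.2)
          (((1 : ℝ →L[ℝ] ℝ).smulRight (deriv (deriv γ) z₀)).comp
            (ContinuousLinearMap.snd ℝ (ℝ × R3) ℝ)) p₀ :=
        hTz.comp (f := Prod.snd) p₀ hasFDerivAt_snd
      have h3 := HasFDerivAt.inner ℝ h1 h2'
      refine h3.congr_fderiv (Eq.symm ?_)
      refine ContinuousLinearMap.ext fun w => ?_
      obtain ⟨⟨ds, dx⟩, dz⟩ := w
      have hTT : (inner ℝ (deriv γ z₀) (deriv γ z₀) : ℝ) = 1 := by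
        rw [real_inner_self_eq_norm_sq, harc z₀]; norm_num
      simp only [hD, hA, ContinuousLinearMap.add_apply, ContinuousLinearMap.coe_comp',
        Function.comp_apply, ContinuousLinearMap.coe_fst', ContinuousLinearMap.coe_snd',
        ContinuousLinearMap.smul_apply, innerSL_apply_apply, fderivInnerCLM_apply,
        ContinuousLinearMap.prod_apply, ContinuousLinearMap.sub_apply,
        ContinuousLinearMap.smulRight_apply, ContinuousLinearMap.one_apply,
        inner_sub_left, inner_sub_right, real_inner_smul_left, real_inner_smul_right,
        smul_eq_mul, one_smul]
      rw [real_inner_comm (deriv γ z₀) dx]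
      have hq₀' : q₀ = (inner ℝ p.2 (deriv (deriv γ) z₀) : ℝ) - (inner ℝ (γ z₀) (deriv (deriv γ) z₀) : ℝ) := by
        rw [hq₀, inner_sub_left]
      linear_combination dz * hTT + dz * hq₀'
    -- the map Φ and its invertible derivative
    set Φ : (ℝ × R3) × ℝ → (ℝ × R3) × ℝ := fun q => (q.1, F q) with hΦ
    set E' : ((ℝ × R3) × ℝ) ≃L[ℝ] ((ℝ × R3) × ℝ) :=
      ContinuousLinearEquiv.equivOfInverse
        ((ContinuousLinearMap.fst ℝ (ℝ × R3) ℝ).prod D)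
        ((ContinuousLinearMap.fst ℝ (ℝ × R3) ℝ).prod
          ((q₀ - 1)⁻¹ • ((ContinuousLinearMap.snd ℝ (ℝ × R3) ℝ) -
            A.comp (ContinuousLinearMap.fst ℝ (ℝ × R3) ℝ))))
        (fun w => by
          obtain ⟨dp, dz⟩ := w
          refine Prod.ext rfl ?_
          simp [hD, smul_eq_mul]
          field_simp)
        (fun w => by
          obtain ⟨dp, dw⟩ := w
          refine Prod.ext rfl ?_
          simp [hD, smul_eq_mul]
          field_simp
          ring) with hE'
    have hΦ' : HasFDerivAt Φ (E' : ((ℝ × R3) × ℝ) →L[ℝ] ((ℝ × R3) × ℝ)) p₀ :=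
      hasFDerivAt_fst.prodMk hDF
    have hΦC : ContDiffAt ℝ 1 Φ p₀ := (contDiff_fst.prodMk hFC).contDiffAt
    set Ψ : (ℝ × R3) × ℝ → (ℝ × R3) × ℝ := hΦC.localInverse hΦ' one_ne_zero with hΨ
    have hΨC : ContDiffAt ℝ 1 Ψ (Φ p₀) := hΦC.to_localInverse hΦ' one_ne_zero
    have hS : HasStrictFDerivAt Φ (E' : ((ℝ × R3) × ℝ) →L[ℝ] ((ℝ × R3) × ℝ)) p₀ :=
      hΦC.hasStrictFDerivAt' hΦ' one_ne_zero
    have hFp₀ : F p₀ = 0 := (hξ p hp).2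
    have hΦp₀ : Φ p₀ = (p, 0) := by rw [hΦ]; simp [hFp₀]; rfl
    have hright : ∀ᶠ y in nhds (Φ p₀), Φ (Ψ y) = y := hS.eventually_right_inverse
    have hΨp₀ : Ψ (Φ p₀) = p₀ := hS.localInverse_apply_image
    -- the local implicit function g
    set g : ℝ × R3 → ℝ := fun p' => (Ψ (p', 0)).2 with hg
    have hu : ContDiffAt ℝ 1 (fun p' : ℝ × R3 => ((p', 0) : (ℝ × R3) × ℝ)) p :=
      (contDiff_id.prodMk contDiff_const).contDiffAt
    have hgC : ContDiffAt ℝ 1 g p := by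
      have : ContDiffAt ℝ 1 Ψ ((p, 0) : (ℝ × R3) × ℝ) := hΦp₀ ▸ hΨC
      exact contDiffAt_snd.comp p (this.comp p hu)
    have hgp : g p = ξ p := by
      have : Ψ (p, 0) = p₀ := by rw [← hΦp₀]; exact hΨp₀
      rw [hg]; simp only [this]; rfl
    -- eventually, ξ = g near p
    have heq : ξ =ᶠ[nhds p] g := by
      have htend : Filter.Tendsto (fun p' : ℝ × R3 => ((p', 0) : (ℝ × R3) × ℝ))
          (nhds p) (nhds (Φ p₀)) := by
        rw [hΦp₀]
        exact (continuous_id.prodMk continuous_const).continuousAt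
      have h1 : ∀ᶠ p' in nhds p, Φ (Ψ (p', 0)) = (p', 0) := htend.eventually hright
      have hgc : ContinuousAt g p := hgC.continuousAt
      have h2 : ∀ᶠ p' in nhds p, |g p' - p'.1| < r / 4 := by
        have hcnt : ContinuousAt (fun p' : ℝ × R3 => |g p' - p'.1|) p :=
          (hgc.sub continuous_fst.continuousAt).abs
        have hval : |g p - p.1| < r / 4 := by
          rw [hgp, abs_lt]
          obtain ⟨hIoo, _⟩ := hξ p hp
          constructor <;> [linarith [hIoo.1]; linarith [hIoo.2]]
        exact hcnt.eventually_lt continuousAt_const hval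
      have h3 : ∀ᶠ p' in nhds p, p' ∈ Ξ := hopen.mem_nhds hp
      filter_upwards [h1, h2, h3] with p' h1' h2' h3'
      have hfst : (Ψ (p', 0)).1 = p' := congrArg Prod.fst h1'
      have hsnd : F (Ψ (p', 0)) = 0 := congrArg Prod.snd h1'
      have hΨeq : Ψ (p', 0) = (p', g p') := by
        rw [hg]; exact Prod.ext hfst rfl
      rw [hΨeq] at hsnd
      have : (inner ℝ (p'.2 - γ (g p')) (deriv γ (g p')) : ℝ) = 0 := hsnd
      have hIoo' : g p' ∈ Set.Ioo (p'.1 - r / 4) (p'.1 + r / 4) := by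
        rw [abs_lt] at h2'
        constructor <;> [linarith [h2'.1]; linarith [h2'.2]]
      exact (hξuniq p' h3' (g p') hIoo' this).symm
    have hξC : ContDiffAt ℝ 1 ξ p := hgC.congr_of_eventuallyEq heq
    refine ⟨hξC, ?_⟩
    -- compute the derivative
    have hdξ : HasFDerivAt ξ (fderiv ℝ ξ p) p :=
      (hξC.differentiableAt one_ne_zero).hasFDerivAt
    have hcomp : HasFDerivAt (fun p' : ℝ × R3 => F (p', ξ p'))
        (D.comp ((ContinuousLinearMap.id ℝ (ℝ × R3)).prod (fderiv ℝ ξ p))) p := by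
      have hinner : HasFDerivAt (fun p' : ℝ × R3 => ((p', ξ p') : (ℝ × R3) × ℝ))
          ((ContinuousLinearMap.id ℝ (ℝ × R3)).prod (fderiv ℝ ξ p)) p :=
        (hasFDerivAt_id p).prodMk hdξ
      exact hDF.comp p hinner
    have hzero : HasFDerivAt (fun p' : ℝ × R3 => F (p', ξ p')) (0 : (ℝ × R3) →L[ℝ] ℝ) p := by
      have hev : (fun p' : ℝ × R3 => F (p', ξ p')) =ᶠ[nhds p] fun _ => 0 := by
        filter_upwards [hopen.mem_nhds hp] with p' hp'
        exact (hξ p' hp').2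
      exact (hasFDerivAt_const (0 : ℝ) p).congr_of_eventuallyEq hev
    have hDeq : D.comp ((ContinuousLinearMap.id ℝ (ℝ × R3)).prod (fderiv ℝ ξ p)) = 0 :=
      hcomp.unique hzero
    intro w
    have := ContinuousLinearMap.ext_iff.mp hDeq w
    simp only [hD, hA, ContinuousLinearMap.add_apply, ContinuousLinearMap.coe_comp',
      Function.comp_apply, ContinuousLinearMap.coe_fst', ContinuousLinearMap.coe_snd',
      ContinuousLinearMap.smul_apply, innerSL_apply_apply, ContinuousLinearMap.prod_apply,
      ContinuousLinearMap.coe_id', id_eq, smul_eq_mul, ContinuousLinearMap.zero_apply] at this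
    rw [real_inner_comm (deriv γ z₀) w.2, eq_div_iff h1q]
    linarith [this]
  -- assemble everything
  refine ⟨hopen, ?_, ?_, ?_, ?_⟩
  · exact fun p hp => ((key p hp).1).contDiffWithinAt
  · -- (ii)
    intro p hp
    obtain ⟨hξC, hform⟩ := key p hp
    have hdξ : HasFDerivAt ξ (fderiv ℝ ξ p) p :=
      (hξC.differentiableAt one_ne_zero).hasFDerivAt
    have hin : HasDerivAt (fun s : ℝ => ((s, p.2) : ℝ × R3)) ((1 : ℝ), (0 : R3)) p.1 :=
      (hasDerivAt_id p.1).prodMk (hasDerivAt_const p.1 p.2)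
    have hcomp : HasDerivAt (fun s : ℝ => ξ (s, p.2)) (fderiv ℝ ξ p ((1 : ℝ), (0 : R3))) p.1 := by
      have := hdξ.comp_hasDerivAt_of_eq p.1 hin (by simp)
      exact this
    rw [hcomp.deriv, hform ((1 : ℝ), (0 : R3))]
    simp
  · -- (iii)
    intro p hp v
    obtain ⟨hξC, hform⟩ := key p hp
    have hdξ : HasFDerivAt ξ (fderiv ℝ ξ p) p :=
      (hξC.differentiableAt one_ne_zero).hasFDerivAt
    have hin : HasFDerivAt (fun x : R3 => ((p.1, x) : ℝ × R3))
        ((0 : R3 →L[ℝ] ℝ).prod (ContinuousLinearMap.id ℝ R3)) p.2 :=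
      (hasFDerivAt_const p.1 p.2).prodMk (hasFDerivAt_id p.2)
    have hdξ' : HasFDerivAt ξ (fderiv ℝ ξ p) ((p.1, p.2) : ℝ × R3) := by
      rw [Prod.mk.eta]; exact hdξ
    have hcomp : HasFDerivAt (fun x : R3 => ξ (p.1, x))
        ((fderiv ℝ ξ p).comp ((0 : R3 →L[ℝ] ℝ).prod (ContinuousLinearMap.id ℝ R3))) p.2 :=
      hdξ'.comp p.2 hin
    have hq₀b : |(inner ℝ (p.2 - γ (ξ p)) (deriv (deriv γ) (ξ p)) : ℝ)| ≤ 3 / 8 := hqb p hp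
    have h1q : (1 : ℝ) - (inner ℝ (p.2 - γ (ξ p)) (deriv (deriv γ) (ξ p)) : ℝ) ≠ 0 := by
      have := abs_le.mp hq₀b; intro h; linarith [this.2]
    rw [hcomp.fderiv]
    have := hform ((0 : ℝ), v)
    simp only [ContinuousLinearMap.coe_comp', Function.comp_apply,
      ContinuousLinearMap.prod_apply, ContinuousLinearMap.zero_apply,
      ContinuousLinearMap.coe_id', id_eq]
    rw [this, real_inner_comm v]
    generalize (inner ℝ (deriv γ (ξ p)) v : ℝ) = c
    generalize hqq : (inner ℝ (p.2 - γ (ξ p)) (deriv (deriv γ) (ξ p)) : ℝ) = q at h1q ⊢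
    field_simp
    ring
  · -- (iv)
    intro ℓ hℓ a ha p hp
    have hmem : (p.1 + ℓ, p.2 + a) ∈ Ξ := by
      rw [hΞ] at hp ⊢
      have : p.2 + a - γ (p.1 + ℓ) = p.2 - γ p.1 := by rw [ha p.1]; abel
      simpa [this] using hp
    have hders : ∀ t : ℝ, deriv γ (t + ℓ) = deriv γ t := by
      intro t
      have hfun : (fun s => γ (s + ℓ)) = fun s => γ s + a := funext ha
      have h1 : deriv (fun s => γ (s + ℓ)) t = deriv γ (t + ℓ) := by
        simpa using deriv_comp_add_const γ ℓ t
      have h2 : deriv (fun s => γ s + a) t = deriv γ t := by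
        simp [deriv_add_const]
      rw [← h1, hfun, h2]
    have hIoo : ξ p + ℓ ∈ Set.Ioo ((p.1 + ℓ) - r / 4) ((p.1 + ℓ) + r / 4) := by
      obtain ⟨h, _⟩ := hξ p hp
      exact ⟨by linarith [h.1], by linarith [h.2]⟩
    have hinner : (inner ℝ ((p.2 + a) - γ (ξ p + ℓ)) (deriv γ (ξ p + ℓ)) : ℝ) = 0 := by
      have h1 : (p.2 + a) - γ (ξ p + ℓ) = p.2 - γ (ξ p) := by rw [ha (ξ p)]; abel
      rw [h1, hders (ξ p)]
      exact (hξ p hp).2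
    exact ⟨hmem, (hξuniq (p.1 + ℓ, p.2 + a) hmem (ξ p + ℓ) hIoo hinner).symm⟩
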